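/- Let ρ : B₃ → GL₄(ℂ) be an irreducible 4-dimensional representation of the braid group B₃ such that ρ(σ₁) is diagonalizable with eigenvalues α₁, α₂, α₃, α₄ and such that ρ(Δ₃²) = z·I for a scalar z ∈ ℂ. Then z² = (α₁α₂α₃α₄)³, i.e. z is one of the two square roots of (α₁α₂α₃α₄)³. -/

import Mathlib

/-- The braid relations on `m` generators (standing for `σ_1,…,σ_m`). -/
def braidRels (m : ℕ) : Set (FreeGroup (Fin m)) :=
  { r | (∃ i j : Fin m, (i : ℕ) + 1 = (j : ℕ) ∧
          r = FreeGroup.of i * FreeGroup.of j * FreeGroup.of i *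
              (FreeGroup.of j * FreeGroup.of i * FreeGroup.of j)⁻¹) ∨
        (∃ i j : Fin m, (i : ℕ) + 2 ≤ (j : ℕ) ∧
          r = FreeGroup.of i * FreeGroup.of j * (FreeGroup.of j * FreeGroup.of i)⁻¹) }

/-- Artin's braid group `B_n`, with generators `σ_1,…,σ_{n-1}`. -/
def BraidGroup (n : ℕ) : Type := PresentedGroup (braidRels (n - 1))

instance (n : ℕ) : Group (BraidGroup n) := by unfold BraidGroup; infer_instance

/-- The generator `σ_{i+1}` of the braid group `B_n`, for `i : Fin (n-1)`. -/
def braidGen {n : ℕ} (i : Fin (n - 1)) : BraidGroup n := PresentedGroup.of i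

/-- The central element `Δ_n² = (σ_1 σ_2 ⋯ σ_{n-1})^n` of `B_n`. -/
def deltaSq (n : ℕ) : BraidGroup n := ((List.ofFn (fun i : Fin (n-1) => braidGen i)).prod) ^ n

/-- Irreducibility of a matrix representation: the only invariant subspaces of `ℂ^m`
are `⊥` and `⊤`. -/
def IsIrreducibleRep {G : Type*} [Group G] {m : ℕ}
    (ρ : G →* Matrix.GeneralLinearGroup (Fin m) ℂ) : Prop :=
  ∀ U : Submodule ℂ (Fin m → ℂ),
    (∀ g : G, ∀ x ∈ U, (ρ g : Matrix (Fin m) (Fin m) ℂ).mulVec x ∈ U) → U = ⊥ ∨ U = ⊤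

private lemma braid_rel3 :
    braidGen (0 : Fin (3-1)) * braidGen 1 * braidGen 0
      = braidGen 1 * braidGen 0 * braidGen 1 := by
  have hr : (FreeGroup.of (0 : Fin 2) * FreeGroup.of 1 * FreeGroup.of 0 *
      (FreeGroup.of 1 * FreeGroup.of 0 * FreeGroup.of 1)⁻¹) ∈ braidRels 2 :=
    Or.inl ⟨0, 1, by norm_num, rfl⟩
  have h1 : PresentedGroup.mk (braidRels 2)
      (FreeGroup.of (0 : Fin 2) * FreeGroup.of 1 * FreeGroup.of 0 *
        (FreeGroup.of 1 * FreeGroup.of 0 * FreeGroup.of 1)⁻¹) = 1 :=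
    (QuotientGroup.eq_one_iff _).mpr (Subgroup.subset_normalClosure hr)
  have h2 : (braidGen (0 : Fin (3-1)) * braidGen 1 * braidGen 0) *
      (braidGen 1 * braidGen 0 * braidGen 1 : BraidGroup 3)⁻¹ = 1 := by
    exact h1
  exact mul_inv_eq_one.mp h2

private lemma deltaSq_eq :
    deltaSq 3 = (braidGen (0 : Fin (3-1)) * braidGen 1) ^ 3 := by
  have : (List.ofFn (fun i : Fin (3-1) => braidGen i)).prod
      = braidGen (0 : Fin (3-1)) * braidGen 1 := by
    simp [List.ofFn_succ]
  rw [deltaSq, this]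

private lemma mulVec_unit_ne_zero (u : Matrix.GeneralLinearGroup (Fin 4) ℂ)
    (v : Fin 4 → ℂ) (hv : v ≠ 0) : (u : Matrix (Fin 4) (Fin 4) ℂ).mulVec v ≠ 0 := by
  intro h
  apply hv
  have : ((u⁻¹ : Matrix.GeneralLinearGroup (Fin 4) ℂ) : Matrix (Fin 4) (Fin 4) ℂ).mulVec
      ((u : Matrix (Fin 4) (Fin 4) ℂ).mulVec v) = v := by
    rw [Matrix.mulVec_mulVec, ← Units.val_mul, inv_mul_cancel, Units.val_one,
      Matrix.one_mulVec]
  rw [h, Matrix.mulVec_zero] at this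
  exact this.symm

private lemma no_common_eigenvector (ρ : BraidGroup 3 →* Matrix.GeneralLinearGroup (Fin 4) ℂ)
    (hirr : IsIrreducibleRep ρ) (v : Fin 4 → ℂ) (hv : v ≠ 0) (δ η : ℂ)
    (hδ : (ρ (braidGen 0 * braidGen 1 * braidGen 0) : Matrix (Fin 4) (Fin 4) ℂ).mulVec v = δ • v)
    (hη : (ρ (braidGen 0 * braidGen 1) : Matrix (Fin 4) (Fin 4) ℂ).mulVec v = η • v) :
    False := by
  classical
  have hδ0 : δ ≠ 0 := by
    intro h; exact mulVec_unit_ne_zero _ v hv (by rw [hδ, h, zero_smul])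
  have hη0 : η ≠ 0 := by
    intro h; exact mulVec_unit_ne_zero _ v hv (by rw [hη, h, zero_smul])
  let H : Subgroup (BraidGroup 3) :=
    { carrier := {g | ∃ c : ℂ, (ρ g : Matrix (Fin 4) (Fin 4) ℂ).mulVec v = c • v}
      one_mem' := ⟨1, by simp [map_one, Units.val_one, Matrix.one_mulVec]⟩
      mul_mem' := by
        rintro a b ⟨c, hc⟩ ⟨d, hd⟩
        refine ⟨c * d, ?_⟩
        rw [map_mul, Units.val_mul, ← Matrix.mulVec_mulVec, hd, Matrix.mulVec_smul, hc,
          smul_smul, mul_comm]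
      inv_mem' := by
        rintro a ⟨c, hc⟩
        have hc0 : c ≠ 0 := by
          intro h; exact mulVec_unit_ne_zero _ v hv (by rw [hc, h, zero_smul])
        refine ⟨c⁻¹, ?_⟩
        have h1 : (ρ a⁻¹ : Matrix (Fin 4) (Fin 4) ℂ).mulVec
            ((ρ a : Matrix (Fin 4) (Fin 4) ℂ).mulVec v) = v := by
          rw [Matrix.mulVec_mulVec, ← Units.val_mul, ← map_mul, inv_mul_cancel, map_one,
            Units.val_one, Matrix.one_mulVec]
        rw [hc, Matrix.mulVec_smul] at h1
        calc (ρ a⁻¹ : Matrix (Fin 4) (Fin 4) ℂ).mulVec v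
            = c⁻¹ • (c • (ρ a⁻¹ : Matrix (Fin 4) (Fin 4) ℂ).mulVec v) := by
              rw [smul_smul, inv_mul_cancel₀ hc0, one_smul]
          _ = c⁻¹ • v := by rw [h1] }
  have hg0 : braidGen (0 : Fin (3-1)) ∈ H := by
    have hid : braidGen (0 : Fin (3-1)) =
        (braidGen 0 * braidGen 1)⁻¹ * (braidGen 0 * braidGen 1 * braidGen 0) := by group
    rw [hid]
    exact H.mul_mem (H.inv_mem ⟨η, hη⟩) ⟨δ, hδ⟩
  have hg1 : braidGen (1 : Fin (3-1)) ∈ H := by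
    have hid : braidGen (1 : Fin (3-1)) =
        (braidGen 0 * braidGen 1 * braidGen 0)⁻¹ *
          ((braidGen 0 * braidGen 1) * (braidGen 0 * braidGen 1)) := by group
    rw [hid]
    exact H.mul_mem (H.inv_mem ⟨δ, hδ⟩) (H.mul_mem ⟨η, hη⟩ ⟨η, hη⟩)
  have hall : ∀ g : BraidGroup 3, g ∈ H := by
    intro g
    refine PresentedGroup.generated_by (braidRels (3-1)) H ?_ g
    intro j
    fin_cases j
    · exact hg0
    · exact hg1
  set U : Submodule ℂ (Fin 4 → ℂ) := Submodule.span ℂ {v} with hU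
  have hinv : ∀ g : BraidGroup 3, ∀ x ∈ U, (ρ g : Matrix (Fin 4) (Fin 4) ℂ).mulVec x ∈ U := by
    intro g x hx
    obtain ⟨a, rfl⟩ := Submodule.mem_span_singleton.mp hx
    obtain ⟨c, hc⟩ := hall g
    rw [Matrix.mulVec_smul, hc, smul_smul]
    exact Submodule.mem_span_singleton.mpr ⟨a * c, rfl⟩
  rcases hirr U hinv with h | h
  · exact hv (by simpa [hU, Submodule.span_singleton_eq_bot] using h)
  · have h1 : Module.finrank ℂ U = 1 := finrank_span_singleton hv
    rw [h] at h1
    simp [finrank_top] at h1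
open Polynomial in
private lemma lagrange_poly (a b c t₁ t₂ t₃ : ℂ) (e1 : t₁ + t₂ + t₃ = 0)
    (e2 : t₁*(b+c) + t₂*(a+c) + t₃*(a+b) = 0)
    (e3 : t₁*(b*c) + t₂*(a*c) + t₃*(a*b) = 1) :
    C t₁ * ((X - C b) * (X - C c)) + C t₂ * ((X - C a) * (X - C c))
      + C t₃ * ((X - C a) * (X - C b)) = 1 := by
  have h : C t₁ * ((X - C b) * (X - C c)) + C t₂ * ((X - C a) * (X - C c))
      + C t₃ * ((X - C a) * (X - C b))
      = C (t₁ + t₂ + t₃) * X^2 - C (t₁*(b+c) + t₂*(a+c) + t₃*(a+b)) * X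
        + C (t₁*(b*c) + t₂*(a*c) + t₃*(a*b)) := by
    simp only [map_add, map_mul]
    ring
  rw [h, e1, e2, e3]
  simp

open Polynomial in
private lemma cube_factor (ν ω zz : ℂ) (hν : ν^3 = zz) (hω : ω^2 + ω + 1 = 0)
    (hω3 : ω^3 = 1) :
    (X - C ν) * (X - C (ν*ω)) * (X - C (ν*ω^2)) = X^3 - C zz := by
  have h1 : ν + ν*ω + ν*ω^2 = 0 := by linear_combination ν * hω
  have h2 : ν*(ν*ω) + ν*(ν*ω^2) + (ν*ω)*(ν*ω^2) = 0 := by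
    linear_combination ν^2 * ω * hω
  have h3 : ν*(ν*ω)*(ν*ω^2) = zz := by
    linear_combination ω^3 * hν + zz * hω3
  have h : (X - C ν) * (X - C (ν*ω)) * (X - C (ν*ω^2))
      = X^3 - C (ν + ν*ω + ν*ω^2) * X^2
        + C (ν*(ν*ω) + ν*(ν*ω^2) + (ν*ω)*(ν*ω^2)) * X - C (ν*(ν*ω)*(ν*ω^2)) := by
    simp only [map_add, map_mul]
    ring
  rw [h, h1, h2, h3]
  simp

private lemma det_prodMap {M N : Type*} [AddCommGroup M] [AddCommGroup N]
    [Module ℂ M] [Module ℂ N] [FiniteDimensional ℂ M] [FiniteDimensional ℂ N]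
    (f : M →ₗ[ℂ] M) (g : N →ₗ[ℂ] N) :
    LinearMap.det (f.prodMap g) = LinearMap.det f * LinearMap.det g := by
  classical
  let b₁ := Module.finBasis ℂ M
  let b₂ := Module.finBasis ℂ N
  rw [← LinearMap.det_toMatrix (b₁.prod b₂), LinearMap.toMatrix_prodMap,
    Matrix.det_fromBlocks_zero₂₁, LinearMap.det_toMatrix, LinearMap.det_toMatrix]

set_option maxHeartbeats 1000000 in
private lemma key (X Y : Matrix (Fin 4) (Fin 4) ℂ) (z : ℂ)
    (hbraid : X * Y * X = Y * X * Y) (hW3 : (X * Y) ^ 3 = z • 1) (hz0 : z ≠ 0)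
    (hnce : ∀ v : Fin 4 → ℂ, v ≠ 0 → ∀ δ η : ℂ,
      (X * Y * X).mulVec v = δ • v → (X * Y).mulVec v = η • v → False) :
    z ^ 2 = X.det ^ 3 := by
  classical
  set W : Matrix (Fin 4) (Fin 4) ℂ := X * Y with hWdef
  set D : Matrix (Fin 4) (Fin 4) ℂ := X * Y * X with hDdef
  set E : ℂ → Submodule ℂ (Fin 4 → ℂ) :=
    fun δ => LinearMap.ker (Matrix.toLin' (D - δ • 1)) with hEdef
  set K : ℂ → Submodule ℂ (Fin 4 → ℂ) :=
    fun η => LinearMap.ker (Matrix.toLin' (W - η • 1)) with hKdef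
  have memE : ∀ δ x, x ∈ E δ ↔ D.mulVec x = δ • x := by
    intro δ x
    simp [hEdef, LinearMap.mem_ker, Matrix.toLin'_apply, Matrix.sub_mulVec,
      Matrix.smul_mulVec, Matrix.one_mulVec, sub_eq_zero]
  have memK : ∀ η x, x ∈ K η ↔ W.mulVec x = η • x := by
    intro η x
    simp [hKdef, LinearMap.mem_ker, Matrix.toLin'_apply, Matrix.sub_mulVec,
      Matrix.smul_mulVec, Matrix.one_mulVec, sub_eq_zero]
  have hD2 : D * D = z • 1 := by
    have h1 : D * D = (X * Y * X) * (Y * X * Y) := by rw [← hbraid, ← hDdef]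
    rw [h1, ← hW3, hWdef]
    simp only [pow_succ, pow_zero, one_mul, mul_assoc]
  -- key dimension bound from irreducibility
  have bound : ∀ δ : ℂ, Module.finrank ℂ (E δ) ≤ 2 := by
    intro δ
    by_contra hE3
    push_neg at hE3
    obtain ⟨ν, hν⟩ := IsAlgClosed.exists_pow_nat_eq z (n := 3) (by norm_num)
    have hν0 : ν ≠ 0 := by intro h; apply hz0; rw [← hν, h]; ring
    have hprim : IsPrimitiveRoot (Complex.exp (2 * Real.pi * Complex.I / 3)) 3 :=
      Complex.isPrimitiveRoot_exp 3 (by norm_num)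
    obtain ⟨ω, hprim⟩ : ∃ ω : ℂ, IsPrimitiveRoot ω 3 := ⟨_, hprim⟩
    have hω3 : ω ^ 3 = 1 := hprim.pow_eq_one
    have hω1 : ω ≠ 1 := hprim.ne_one (by norm_num)
    have hω21 : ω ^ 2 ≠ 1 := hprim.pow_ne_one_of_pos_of_lt (by norm_num) (by norm_num)
    have hω0 : ω ≠ 0 := by
      intro h; have := hω3; rw [h] at this; simp at this
    have hωsum : ω ^ 2 + ω + 1 = 0 := by
      have h0 : (ω - 1) * (ω ^ 2 + ω + 1) = 0 := by linear_combination hω3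
      exact (mul_eq_zero.mp h0).resolve_left (sub_ne_zero.mpr hω1)
    obtain ⟨a, b, c, hadef, hbdef, hcdef⟩ :
        ∃ a b c : ℂ, a = ν ∧ b = ν * ω ∧ c = ν * ω ^ 2 := ⟨_, _, _, rfl, rfl, rfl⟩
    have dab : a - b ≠ 0 := by
      rw [hadef, hbdef]
      intro h; apply hν0
      have h2 : ν * (1 - ω) = 0 := by linear_combination h
      rcases mul_eq_zero.mp h2 with h3 | h3
      · exact h3
      · exact absurd (by linear_combination -h3) hω1
    have dac : a - c ≠ 0 := by
      rw [hadef, hcdef]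
      intro h; apply hν0
      have h2 : ν * (1 - ω ^ 2) = 0 := by linear_combination h
      rcases mul_eq_zero.mp h2 with h3 | h3
      · exact h3
      · exact absurd (by linear_combination -h3) hω21
    have dbc : b - c ≠ 0 := by
      rw [hbdef, hcdef]
      intro h
      have h2 : (ν * ω) * (1 - ω) = 0 := by linear_combination h
      rcases mul_eq_zero.mp h2 with h3 | h3
      · exact (mul_ne_zero hν0 hω0) h3
      · exact absurd (by linear_combination -h3) hω1
    have dba : b - a ≠ 0 := fun h => dab (by linear_combination -h)
    have dca : c - a ≠ 0 := fun h => dac (by linear_combination -h)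
    have dcb : c - b ≠ 0 := fun h => dbc (by linear_combination -h)
    obtain ⟨t₁, t₂, t₃, ht1, ht2, ht3⟩ :
        ∃ t₁ t₂ t₃ : ℂ, t₁ = (a - b)⁻¹ * (a - c)⁻¹ ∧ t₂ = (b - a)⁻¹ * (b - c)⁻¹ ∧
          t₃ = (c - a)⁻¹ * (c - b)⁻¹ := ⟨_, _, _, rfl, rfl, rfl⟩
    have e1 : t₁ + t₂ + t₃ = 0 := by
      rw [ht1, ht2, ht3]; field_simp; ring
    have e2 : t₁*(b+c) + t₂*(a+c) + t₃*(a+b) = 0 := by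
      rw [ht1, ht2, ht3]; field_simp; ring
    have e3 : t₁*(b*c) + t₂*(a*c) + t₃*(a*b) = 1 := by
      rw [ht1, ht2, ht3]; field_simp; ring
    -- matrix identities via aeval
    have hcomm : ∀ p q : ℂ, (W - p • 1) * (W - q • 1) = (W - q • 1) * (W - p • 1) := by
      intro p q
      have h := congrArg (Polynomial.aeval W)
        (mul_comm (Polynomial.X - Polynomial.C p) (Polynomial.X - Polynomial.C q))
      simpa [map_mul, map_sub, Polynomial.aeval_X, Polynomial.aeval_C,
        Algebra.algebraMap_eq_smul_one] using h
    have hprod : (W - a • 1) * ((W - b • 1) * (W - c • 1)) = 0 := by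
      have hcf := cube_factor ν ω z hν hωsum hω3
      rw [← hcdef, ← hbdef, ← hadef] at hcf
      have h := congrArg (Polynomial.aeval W) hcf
      have h2 : (W - a • 1) * (W - b • 1) * (W - c • 1) = W ^ 3 - z • 1 := by
        simpa [map_mul, map_sub, map_pow, Polynomial.aeval_X, Polynomial.aeval_C,
          Algebra.algebraMap_eq_smul_one] using h
      rw [← mul_assoc, h2, hW3, sub_self]
    have hprod2 : (W - b • 1) * ((W - a • 1) * (W - c • 1)) = 0 := by
      rw [← mul_assoc, hcomm b a, mul_assoc]; exact hprod
    have hprod3 : (W - c • 1) * ((W - a • 1) * (W - b • 1)) = 0 := by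
      rw [← mul_assoc, hcomm c a, mul_assoc, hcomm c b]; exact hprod
    have hlag : t₁ • ((W - b • 1) * (W - c • 1)) + t₂ • ((W - a • 1) * (W - c • 1))
        + t₃ • ((W - a • 1) * (W - b • 1)) = 1 := by
      have h := congrArg (Polynomial.aeval W) (lagrange_poly a b c t₁ t₂ t₃ e1 e2 e3)
      simpa [map_mul, map_add, map_sub, Polynomial.aeval_X, Polynomial.aeval_C,
        Algebra.algebraMap_eq_smul_one, smul_mul_assoc] using h
    have hspan : ∀ v : Fin 4 → ℂ, v ∈ K a ⊔ (K b ⊔ K c) := by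
      intro v
      have hx : ∀ (p t : ℂ) (M : Matrix (Fin 4) (Fin 4) ℂ),
          (W - p • 1) * M = 0 → t • M.mulVec v ∈ K p := by
        intro p t M h0
        rw [sub_mul, Matrix.smul_mul, Matrix.one_mul, sub_eq_zero] at h0
        rw [memK, Matrix.mulVec_smul, Matrix.mulVec_mulVec, h0, Matrix.smul_mulVec]
        exact smul_comm t p _
      have hsum : t₁ • ((W - b • 1) * (W - c • 1)).mulVec v
          + (t₂ • ((W - a • 1) * (W - c • 1)).mulVec v
          + t₃ • ((W - a • 1) * (W - b • 1)).mulVec v) = v := by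
        have h := congrArg (fun A : Matrix (Fin 4) (Fin 4) ℂ => A.mulVec v) hlag
        simpa [Matrix.add_mulVec, Matrix.smul_mulVec, Matrix.one_mulVec, add_assoc]
          using h
      exact Submodule.mem_sup.mpr ⟨_, hx a t₁ _ hprod, _,
        Submodule.mem_sup.mpr ⟨_, hx b t₂ _ hprod2, _, hx c t₃ _ hprod3, rfl⟩, hsum⟩
    have hKsum : 4 ≤ Module.finrank ℂ (K a) + (Module.finrank ℂ (K b)
        + Module.finrank ℂ (K c)) := by
      have htop : K a ⊔ (K b ⊔ K c) = ⊤ := eq_top_iff.mpr fun v _ => hspan v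
      have h4 : Module.finrank ℂ ↥(K a ⊔ (K b ⊔ K c)) = 4 := by
        rw [htop, finrank_top]; simp
      have hle1 := Submodule.finrank_add_le_finrank_add_finrank (K a) (K b ⊔ K c)
      have hle2 := Submodule.finrank_add_le_finrank_add_finrank (K b) (K c)
      omega
    have step : ∀ η : ℂ, 2 ≤ Module.finrank ℂ (K η) → False := by
      intro η h2K
      have hsum := Submodule.finrank_sup_add_finrank_inf_eq (K η) (E δ)
      have hsup_le : Module.finrank ℂ ↥(K η ⊔ E δ) ≤ 4 := by
        have h := Submodule.finrank_le (K η ⊔ E δ)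
        simpa using h
      have hinf : 1 ≤ Module.finrank ℂ ↥(K η ⊓ E δ) := by omega
      have hne : K η ⊓ E δ ≠ ⊥ := by
        intro h; rw [h] at hinf; simp at hinf
      obtain ⟨v, hvmem, hv0⟩ := Submodule.exists_mem_ne_zero_of_ne_bot hne
      exact hnce v hv0 δ η ((memE δ v).mp hvmem.2) ((memK η v).mp hvmem.1)
    have hor : 2 ≤ Module.finrank ℂ (K a) ∨ 2 ≤ Module.finrank ℂ (K b)
        ∨ 2 ≤ Module.finrank ℂ (K c) := by omega
    rcases hor with h | h | h
    · exact step a h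
    · exact step b h
    · exact step c h
  -- the ±μ eigenspaces of D
  obtain ⟨μ, hμ⟩ := IsAlgClosed.exists_pow_nat_eq z (n := 2) (by norm_num)
  have hμ0 : μ ≠ 0 := by intro h; apply hz0; rw [← hμ, h]; ring
  have h2μ : (2 : ℂ) * μ ≠ 0 := mul_ne_zero two_ne_zero hμ0
  have hDz : ∀ v : Fin 4 → ℂ, D.mulVec (D.mulVec v) = z • v := by
    intro v
    rw [Matrix.mulVec_mulVec, hD2, Matrix.smul_mulVec, Matrix.one_mulVec]
  have hdisj : Disjoint (E μ) (E (-μ)) := by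
    rw [Submodule.disjoint_def]
    intro x h1 h2
    have e1 := (memE μ x).mp h1
    have e2 := (memE (-μ) x).mp h2
    have h3 : (2 * μ) • x = 0 := by
      have h4 : μ • x = (-μ) • x := e1.symm.trans e2
      have h5 : (2 * μ) • x = μ • x - (-μ) • x := by module
      rw [h5, h4, sub_self]
    rcases smul_eq_zero.mp h3 with h | h
    · exact absurd h h2μ
    · exact h
  have hcodis : Codisjoint (E μ) (E (-μ)) := by
    rw [codisjoint_iff_le_sup]
    intro v _
    refine Submodule.mem_sup.mpr ⟨(2*μ)⁻¹ • (μ • v + D.mulVec v), ?_,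
      (2*μ)⁻¹ • (μ • v - D.mulVec v), ?_, ?_⟩
    · rw [memE, Matrix.mulVec_smul, Matrix.mulVec_add, Matrix.mulVec_smul, hDz, ← hμ]
      match_scalars <;> ring
    · rw [memE, Matrix.mulVec_smul, Matrix.mulVec_sub, Matrix.mulVec_smul, hDz, ← hμ]
      match_scalars <;> ring
    · match_scalars <;> field_simp <;> ring
  have hcompl : IsCompl (E μ) (E (-μ)) := ⟨hdisj, hcodis⟩
  have hfr : Module.finrank ℂ (E μ) + Module.finrank ℂ (E (-μ)) = 4 := by
    have h := Submodule.finrank_sup_add_finrank_inf_eq (E μ) (E (-μ))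
    rw [hcodis.eq_top, hdisj.eq_bot] at h
    simpa using h.symm
  have hp2 : Module.finrank ℂ (E μ) = 2 := by
    have := bound μ; have := bound (-μ); omega
  have hq2 : Module.finrank ℂ (E (-μ)) = 2 := by
    have := bound μ; have := bound (-μ); omega
  -- determinant of D via the decomposition
  set e : (E μ × E (-μ)) ≃ₗ[ℂ] (Fin 4 → ℂ) :=
    Submodule.prodEquivOfIsCompl (E μ) (E (-μ)) hcompl with hedef
  have hconj : Matrix.toLin' D = (e : (E μ × E (-μ)) →ₗ[ℂ] (Fin 4 → ℂ)) ∘ₗ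
      ((μ • (LinearMap.id : E μ →ₗ[ℂ] E μ)).prodMap
        ((-μ) • (LinearMap.id : E (-μ) →ₗ[ℂ] E (-μ)))) ∘ₗ
      (e.symm : (Fin 4 → ℂ) →ₗ[ℂ] (E μ × E (-μ))) := by
    apply LinearMap.ext; intro x
    have hx : ((e.symm x).1 : Fin 4 → ℂ) + ((e.symm x).2 : Fin 4 → ℂ) = x := by
      rw [← Submodule.coe_prodEquivOfIsCompl' (E μ) (E (-μ)) hcompl (e.symm x)]
      exact e.apply_symm_apply x
    have h1 := (memE μ _).mp (e.symm x).1.2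
    have h2 := (memE (-μ) _).mp (e.symm x).2.2
    calc Matrix.toLin' D x = D.mulVec (((e.symm x).1 : Fin 4 → ℂ) + ((e.symm x).2 : Fin 4 → ℂ)) := by
          rw [hx, Matrix.toLin'_apply]
      _ = μ • ((e.symm x).1 : Fin 4 → ℂ) + (-μ) • ((e.symm x).2 : Fin 4 → ℂ) := by
          rw [Matrix.mulVec_add, h1, h2]
      _ = _ := by
          simp only [LinearMap.comp_apply, LinearMap.coe_coe, LinearMap.prodMap_apply,
            LinearMap.smul_apply, LinearMap.id_apply]
          rw [hedef]
          simp [Submodule.coe_prodEquivOfIsCompl']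
  have hdetD : D.det = z ^ 2 := by
    have h1 : LinearMap.det (Matrix.toLin' D) = D.det := LinearMap.det_toLin' D
    rw [hconj, LinearMap.det_conj, det_prodMap, LinearMap.det_smul, LinearMap.det_smul,
      LinearMap.det_id, LinearMap.det_id, hp2, hq2] at h1
    rw [← h1]
    rw [← hμ]
    ring
  -- determinants of X and Y
  have hviaW : (X.det * Y.det) ^ 3 = z ^ 4 := by
    have h := congrArg Matrix.det hW3
    rw [Matrix.det_pow, hWdef, Matrix.det_mul] at h
    rw [h, Matrix.det_smul, Matrix.det_one]
    simp
  have hXY0 : X.det * Y.det ≠ 0 := by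
    intro h0
    rw [h0] at hviaW
    simp at hviaW
    exact hz0 (by simpa using (pow_eq_zero_iff (n := 4) (by norm_num)).mp hviaW.symm)
  have hX0 : X.det ≠ 0 := fun h => hXY0 (by rw [h, zero_mul])
  have hY0 : Y.det ≠ 0 := fun h => hXY0 (by rw [h, mul_zero])
  have hXYdet : Y.det = X.det := by
    have hb : (X * Y * X : Matrix (Fin 4) (Fin 4) ℂ) = Y * X * Y := by
      rw [← hDdef]; exact hbraid
    have h := congrArg Matrix.det hb
    simp only [Matrix.det_mul] at h
    have h5 : X.det * Y.det * (X.det - Y.det) = 0 := by linear_combination h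
    rcases mul_eq_zero.mp h5 with h6 | h6
    · exact absurd h6 hXY0
    · exact (sub_eq_zero.mp h6).symm
  have hdetD2 : D.det = X.det ^ 3 := by
    rw [hDdef, Matrix.det_mul, Matrix.det_mul, hXYdet]; ring
  rw [← hdetD2, hdetD]

/-- for an irreducible 4-dimensional representation of `B₃` with `ρ(σ₁)`
diagonalizable with eigenvalues `α₁, α₂, α₃, α₄` and `ρ(Δ₃²) = z·I`, one has
`z² = (α₁α₂α₃α₄)³`, i.e. `z` is one of the two square roots of `(α₁α₂α₃α₄)³`. -/
theorem braid3_scalar_dim4 (ρ : BraidGroup 3 →* Matrix.GeneralLinearGroup (Fin 4) ℂ)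
    (hirr : IsIrreducibleRep ρ) (α₁ α₂ α₃ α₄ : ℂ)
    (hdiag : ∃ C : Matrix.GeneralLinearGroup (Fin 4) ℂ,
      (ρ (braidGen 0) : Matrix (Fin 4) (Fin 4) ℂ) =
        (C : Matrix (Fin 4) (Fin 4) ℂ) * Matrix.diagonal ![α₁, α₂, α₃, α₄] *
          (C⁻¹ : Matrix (Fin 4) (Fin 4) ℂ))
    (z : ℂ)
    (hz : (ρ (deltaSq 3) : Matrix (Fin 4) (Fin 4) ℂ) = z • (1 : Matrix (Fin 4) (Fin 4) ℂ)) :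
    z ^ 2 = (α₁ * α₂ * α₃ * α₄) ^ 3 := by
  classical
  set Xm : Matrix (Fin 4) (Fin 4) ℂ := (ρ (braidGen 0) : Matrix (Fin 4) (Fin 4) ℂ) with hXm
  set Ym : Matrix (Fin 4) (Fin 4) ℂ := (ρ (braidGen 1) : Matrix (Fin 4) (Fin 4) ℂ) with hYm
  have hbraidM : Xm * Ym * Xm = Ym * Xm * Ym := by
    have h := congrArg (fun g : BraidGroup 3 => (ρ g : Matrix (Fin 4) (Fin 4) ℂ)) braid_rel3
    simpa [map_mul, Units.val_mul, hXm, hYm] using h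
  have hρD : (ρ (braidGen 0 * braidGen 1 * braidGen 0) : Matrix (Fin 4) (Fin 4) ℂ)
      = Xm * Ym * Xm := by simp [map_mul, Units.val_mul, hXm, hYm]
  have hρW : (ρ (braidGen 0 * braidGen 1) : Matrix (Fin 4) (Fin 4) ℂ) = Xm * Ym := by
    simp [map_mul, Units.val_mul, hXm, hYm]
  have hW3 : (Xm * Ym) ^ 3 = z • 1 := by
    have h : (ρ (deltaSq 3) : Matrix (Fin 4) (Fin 4) ℂ) = (Xm * Ym) ^ 3 := by
      rw [deltaSq_eq, map_pow]
      rw [Units.val_pow_eq_pow_val, map_mul, Units.val_mul]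
    rw [← h, hz]
  have hz0 : z ≠ 0 := by
    have hu : IsUnit ((ρ (deltaSq 3) : Matrix (Fin 4) (Fin 4) ℂ)).det :=
      (Matrix.isUnit_iff_isUnit_det _).mp (ρ (deltaSq 3)).isUnit
    rw [hz] at hu
    intro h0
    rw [h0] at hu
    simp [Matrix.det_smul] at hu
  have hdetX : Xm.det = α₁ * α₂ * α₃ * α₄ := by
    obtain ⟨C, hC⟩ := hdiag
    have hu : IsUnit (C : Matrix (Fin 4) (Fin 4) ℂ).det :=
      (Matrix.isUnit_iff_isUnit_det _).mp C.isUnit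
    have hCC : (C : Matrix (Fin 4) (Fin 4) ℂ).det *
        ((C : Matrix (Fin 4) (Fin 4) ℂ)⁻¹).det = 1 := by
      rw [Matrix.det_nonsing_inv]
      exact Ring.mul_inverse_cancel _ hu
    have hdiagdet : (Matrix.diagonal ![α₁, α₂, α₃, α₄]).det = α₁ * α₂ * α₃ * α₄ := by
      rw [Matrix.det_diagonal, Fin.prod_univ_four]
      simp
    rw [hC, Matrix.det_mul, Matrix.det_mul, hdiagdet]
    linear_combination (α₁ * α₂ * α₃ * α₄) * hCC
  have hnce : ∀ v : Fin 4 → ℂ, v ≠ 0 → ∀ δ η : ℂ,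
      (Xm * Ym * Xm).mulVec v = δ • v → (Xm * Ym).mulVec v = η • v → False := by
    intro v hv δ η h1 h2
    exact no_common_eigenvector ρ hirr v hv δ η (by rw [hρD]; exact h1)
      (by rw [hρW]; exact h2)
  have hk := key Xm Ym z hbraidM hW3 hz0 hnce
  rw [hk, hdetX]
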